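/- Let l ∈ H₁ be a nonzero linear form and let a, b, c ∈ ℝ³ \ {0} be pairwise non-proportional with l(a) = l(b) = l(c) = 0. If f ∈ P satisfies f(a) = f(b) = f(c) = 0, then there exists a quadratic form q ∈ H₂ with q(x) ≥ 0 for all x ∈ ℝ³ such that f = l²·q. -/

import Mathlib

open MvPolynomial

noncomputable section

/-- The space of ternary (3-variable) real polynomials. `H d` corresponds to the
homogeneous polynomials of degree `d` via the predicate `IsHomogeneous`. -/
abbrev MvP : Type := MvPolynomial (Fin 3) ℝ

/-- The cone `P` of nonnegative ternary quartics. -/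
def Pcone : Set MvP :=
  {f | f.IsHomogeneous 4 ∧ ∀ a : Fin 3 → ℝ, 0 ≤ eval a f}

/-- `F` is a face of the cone `P`. -/
def IsFace (F : Set MvP) : Prop :=
  F ⊆ Pcone ∧
  (∀ a ∈ F, ∀ b ∈ F, a + b ∈ F) ∧
  (∀ c : ℝ, 0 ≤ c → ∀ a ∈ F, c • a ∈ F) ∧
  (∀ a ∈ Pcone, ∀ b ∈ Pcone, a + b ∈ F → a ∈ F ∧ b ∈ F)

/-- `J_F = {q ∈ H₂ : q² ∈ F}`. -/
def Jset (F : Set MvP) : Set MvP :=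
  {q | q.IsHomogeneous 2 ∧ q ^ 2 ∈ F}

/-- a nonnegative quartic with three zeros on a real line is `l²` times a
nonnegative quadratic form. -/

lemma eval_smul_of_isHom {f : MvP} {n : ℕ} (hf : f.IsHomogeneous n)
    (r : ℝ) (x : Fin 3 → ℝ) : eval (r • x) f = r ^ n * eval x f := by
  conv_lhs => rw [f.as_sum]
  conv_rhs => rw [f.as_sum]
  rw [map_sum, map_sum, Finset.mul_sum]
  refine Finset.sum_congr rfl fun m hm => ?_
  have hd : Finsupp.degree m = n := by
    rw [Finsupp.degree_eq_weight_one]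
    exact hf (mem_support_iff.mp hm)
  rw [eval_monomial, eval_monomial]
  have key : (m.prod fun i e => (r • x) i ^ e) = r ^ n * m.prod fun i e => x i ^ e := by
    rw [Finsupp.prod, Finsupp.prod]
    simp only [Pi.smul_apply, smul_eq_mul, mul_pow]
    rw [Finset.prod_mul_distrib, Finset.prod_pow_eq_pow_sum,
      show ∑ i ∈ m.support, m i = Finsupp.degree m from rfl, hd]
  rw [key]; ring

lemma degree_one_single (m : Fin 3 →₀ ℕ) (h : Finsupp.degree m = 1) :
    ∃ i, m = Finsupp.single i 1 := by
  have hsum : m 0 + m 1 + m 2 = 1 := by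
    have h2 : Finsupp.degree m = ∑ i : Fin 3, m i := by
      rw [Finsupp.degree]
      exact Finset.sum_subset (Finset.subset_univ _)
        (fun i _ hi => Finsupp.notMem_support_iff.mp hi)
    rw [h2, Fin.sum_univ_three] at h
    exact h
  have hcases : (m 0 = 1 ∧ m 1 = 0 ∧ m 2 = 0) ∨ (m 0 = 0 ∧ m 1 = 1 ∧ m 2 = 0) ∨
      (m 0 = 0 ∧ m 1 = 0 ∧ m 2 = 1) := by omega
  rcases hcases with ⟨h0, h1, h2⟩ | ⟨h0, h1, h2⟩ | ⟨h0, h1, h2⟩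
  · exact ⟨0, Finsupp.ext fun j => by fin_cases j <;> simp [Finsupp.single_apply, h0, h1, h2]⟩
  · exact ⟨1, Finsupp.ext fun j => by fin_cases j <;> simp [Finsupp.single_apply, h0, h1, h2]⟩
  · exact ⟨2, Finsupp.ext fun j => by fin_cases j <;> simp [Finsupp.single_apply, h0, h1, h2]⟩

def lin (co : Fin 3 → ℝ) : MvP := ∑ i : Fin 3, C (co i) * X i

lemma eval_lin (co : Fin 3 → ℝ) (x : Fin 3 → ℝ) :
    eval x (lin co) = ∑ i : Fin 3, co i * x i := by
  simp [lin]

lemma linear_rep {l : MvP} (hl : l.IsHomogeneous 1) :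
    l = lin (fun i => coeff (Finsupp.single i 1) l) := by
  apply MvPolynomial.ext
  intro m
  rw [lin, MvPolynomial.coeff_sum]
  simp only [coeff_C_mul, coeff_X']
  by_cases hm : Finsupp.degree m = 1
  · obtain ⟨i, rfl⟩ := degree_one_single m hm
    rw [Finset.sum_eq_single i]
    · rw [if_pos rfl, mul_one]
    · intro j _ hj
      rw [if_neg, mul_zero]
      intro he
      exact hj (by
        have := Finsupp.single_left_injective (α := Fin 3) (one_ne_zero (α := ℕ)) he
        exact this)
    · intro h; exact absurd (Finset.mem_univ i) h
  · have h0 : coeff m l = 0 := by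
      apply hl.coeff_eq_zero
      exact hm
    rw [h0]
    symm
    apply Finset.sum_eq_zero
    intro i _
    rw [if_neg, mul_zero]
    intro he
    apply hm
    rw [← he]
    simp [Finsupp.degree_apply, Finsupp.support_single_ne_zero]

lemma X_dvd_of_eval_zero (i : Fin 3) (g : MvP)
    (hg : ∀ x : Fin 3 → ℝ, x i = 0 → eval x g = 0) : X i ∣ g := by
  classical
  set r : MvP := ∑ m ∈ g.support.filter (fun m => m i = 0), monomial m (coeff m g) with hr
  set d : MvP := ∑ m ∈ g.support.filter (fun m => ¬ m i = 0), monomial m (coeff m g) with hd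
  have hsplit : g = d + r := by
    rw [hd, hr, add_comm, Finset.sum_filter_add_sum_filter_not g.support (fun m => m i = 0)]
    exact g.as_sum
  have hdvd : X i ∣ d := by
    apply Finset.dvd_sum
    intro m hm
    rw [Finset.mem_filter] at hm
    have hX : (X i : MvP) = monomial (Finsupp.single i 1) (1:ℝ) := by
      rw [monomial_eq]; simp
    rw [hX, monomial_dvd_monomial]
    exact ⟨Or.inr (Finsupp.single_le_iff.mpr (Nat.one_le_iff_ne_zero.mpr hm.2)), one_dvd _⟩
  have hrz : r = 0 := by
    apply MvPolynomial.funext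
    intro x
    rw [map_zero]
    have hx : eval (Function.update x i 0) g = 0 := hg _ (Function.update_self i 0 x)
    have he : eval x r = eval (Function.update x i 0) r := by
      rw [hr, map_sum, map_sum]
      apply Finset.sum_congr rfl
      intro m hm
      rw [Finset.mem_filter] at hm
      rw [eval_monomial, eval_monomial]
      congr 1
      apply Finsupp.prod_congr
      intro j hj
      have hji : j ≠ i := by
        intro h; subst h
        exact (Finsupp.mem_support_iff.mp hj) hm.2
      rw [Function.update_of_ne hji]
    have hdz : eval (Function.update x i 0) d = 0 := by
      rw [hd, map_sum]
      apply Finset.sum_eq_zero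
      intro m hm
      rw [Finset.mem_filter] at hm
      rw [eval_monomial]
      have : (m.prod fun j e => Function.update x i 0 j ^ e) = 0 := by
        apply Finset.prod_eq_zero (Finsupp.mem_support_iff.mpr hm.2)
        show Function.update x i 0 i ^ m i = 0
        rw [Function.update_self, zero_pow hm.2]
      rw [this, mul_zero]
    have he2 : eval (Function.update x i 0) g
        = eval (Function.update x i 0) d + eval (Function.update x i 0) r := by
      rw [hsplit]; exact map_add _ _ _
    rw [he]
    rw [he2, hdz, zero_add] at hx
    exact hx
  rw [hsplit, hrz, add_zero]
  exact hdvd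

lemma maeval_eq (y : Fin 3 → ℝ) (p : MvP) : MvPolynomial.aeval y p = eval y p := by
  rw [MvPolynomial.aeval_def]; rfl

lemma lin_dvd {co : Fin 3 → ℝ} {i0 : Fin 3} (h0 : co i0 ≠ 0) (f : MvP)
    (hv : ∀ x : Fin 3 → ℝ, eval x (lin co) = 0 → eval x f = 0) : lin co ∣ f := by
  classical
  set S : MvP := ∑ j ∈ Finset.univ.erase i0, C (co j) * X j with hS
  set σf : Fin 3 → MvP := fun j => if j = i0 then C (co i0)⁻¹ * (X i0 - S) else X j with hσf
  set τ : Fin 3 → MvP := fun j => if j = i0 then lin co else X j with hτ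
  have hlin_split : lin co = C (co i0) * X i0 + S := by
    rw [lin, hS, ← Finset.add_sum_erase _ _ (Finset.mem_univ i0)]
  have hΦl : MvPolynomial.aeval σf (lin co) = X i0 := by
    rw [hlin_split, map_add, map_mul, aeval_C, aeval_X]
    have hσS : MvPolynomial.aeval σf S = S := by
      rw [hS, map_sum]
      apply Finset.sum_congr rfl
      intro j hj
      rw [map_mul, aeval_C, aeval_X, hσf]
      simp only [if_neg (Finset.ne_of_mem_erase hj)]
      rfl
    rw [hσS, hσf]
    simp only [eq_self_iff_true, if_true]
    rw [algebraMap_eq, ← mul_assoc, ← C_mul, mul_inv_cancel₀ h0, C_1, one_mul,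
      sub_add_cancel]
  have hΨΦ : ∀ p : MvP, MvPolynomial.aeval τ (MvPolynomial.aeval σf p) = p := by
    intro p
    have hcomp := comp_aeval (R := ℝ) σf (MvPolynomial.aeval τ)
    have h2 := congrArg (fun Φ => Φ p) hcomp
    simp only [AlgHom.comp_apply] at h2
    rw [h2]
    have hfun : (fun j => MvPolynomial.aeval τ (σf j)) = X := by
      funext j
      by_cases hj : j = i0
      · subst hj
        rw [hσf]
        simp only [eq_self_iff_true, if_true]
        rw [map_mul, map_sub, aeval_C, aeval_X, hτ]
        simp only [eq_self_iff_true, if_true]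
        have hτS : MvPolynomial.aeval τ S = S := by
          rw [hS, map_sum]
          apply Finset.sum_congr rfl
          intro k hk
          rw [map_mul, aeval_C, aeval_X, hτ]
          simp only [if_neg (Finset.ne_of_mem_erase hk)]
          rfl
        rw [hτS, hlin_split, add_sub_cancel_right, algebraMap_eq, ← mul_assoc,
          ← C_mul, inv_mul_cancel₀ h0, C_1, one_mul]
      · rw [hσf]
        simp only [if_neg hj]
        rw [aeval_X, hτ]
        simp only [if_neg hj]
    rw [hfun, aeval_X_left_apply]
  have hXdvd : X i0 ∣ MvPolynomial.aeval σf f := by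
    apply X_dvd_of_eval_zero
    intro x hx
    have hcomp := comp_aeval (R := ℝ) σf (MvPolynomial.aeval x)
    have happ : ∀ p : MvP, MvPolynomial.aeval x (MvPolynomial.aeval σf p)
        = MvPolynomial.aeval (fun j => MvPolynomial.aeval x (σf j)) p := by
      intro p
      have := congrArg (fun Φ => Φ p) hcomp
      simpa only [AlgHom.comp_apply] using this
    set y : Fin 3 → ℝ := fun j => MvPolynomial.aeval x (σf j) with hy
    have hyl : eval y (lin co) = 0 := by
      rw [← maeval_eq]
      rw [← happ, hΦl, maeval_eq, eval_X]
      exact hx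
    have := hv y hyl
    rw [← maeval_eq] at this ⊢
    rw [happ]
    exact this
  obtain ⟨h, hh⟩ := hXdvd
  refine ⟨MvPolynomial.aeval τ h, ?_⟩
  have := congrArg (MvPolynomial.aeval τ) hh
  rw [hΨΦ, map_mul] at this
  rw [this]
  congr 1
  rw [aeval_X, hτ]
  simp only [eq_self_iff_true, if_true]

lemma sq_dvd_of_nonneg_root {p : Polynomial ℝ} (hp : ∀ s, 0 ≤ p.eval s) {r : ℝ}
    (hr : p.eval r = 0) : (Polynomial.X - Polynomial.C r) ^ 2 ∣ p := by
  obtain ⟨h, hh⟩ := Polynomial.dvd_iff_isRoot.mpr hr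
  have hcont : Continuous fun s => h.eval s := h.continuous
  have hge : ∀ s > r, 0 ≤ h.eval s := by
    intro s hs
    have h1 := hp s
    rw [hh, Polynomial.eval_mul, Polynomial.eval_sub, Polynomial.eval_X,
      Polynomial.eval_C] at h1
    nlinarith [h1, sub_pos.mpr hs]
  have hle : ∀ s < r, h.eval s ≤ 0 := by
    intro s hs
    have h1 := hp s
    rw [hh, Polynomial.eval_mul, Polynomial.eval_sub, Polynomial.eval_X,
      Polynomial.eval_C] at h1
    nlinarith [h1, sub_neg.mpr hs]
  have ht : Filter.Tendsto (fun s => h.eval s) (nhdsWithin r (Set.Ioi r))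
      (nhds (h.eval r)) := (hcont.tendsto r).mono_left nhdsWithin_le_nhds
  have h1 : 0 ≤ h.eval r :=
    ge_of_tendsto ht (Filter.eventually_of_mem self_mem_nhdsWithin fun s hs => hge s hs)
  have ht2 : Filter.Tendsto (fun s => h.eval s) (nhdsWithin r (Set.Iio r))
      (nhds (h.eval r)) := (hcont.tendsto r).mono_left nhdsWithin_le_nhds
  have h2 : h.eval r ≤ 0 :=
    le_of_tendsto ht2 (Filter.eventually_of_mem self_mem_nhdsWithin fun s hs => hle s hs)
  have hroot : h.eval r = 0 := le_antisymm h2 h1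
  obtain ⟨h2', hh2⟩ := Polynomial.dvd_iff_isRoot.mpr hroot
  exact ⟨h2', by rw [hh, hh2]; ring⟩

lemma natDegree_aeval_le (σp : Fin 3 → Polynomial ℝ) (hσ : ∀ j, (σp j).natDegree ≤ 1)
    (p : MvP) : (MvPolynomial.aeval σp p).natDegree ≤ p.totalDegree := by
  conv_lhs => rw [p.as_sum, map_sum]
  apply Polynomial.natDegree_sum_le_of_forall_le
  intro m hm
  rw [aeval_monomial]
  refine le_trans (Polynomial.natDegree_mul_le) ?_
  have h1 : (algebraMap ℝ (Polynomial ℝ) (coeff m p)).natDegree = 0 :=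
    Polynomial.natDegree_C _
  rw [h1, zero_add]
  refine le_trans ?_ (le_totalDegree hm)
  rw [Finsupp.prod, Finsupp.sum]
  refine le_trans (Polynomial.natDegree_prod_le _ _) ?_
  apply Finset.sum_le_sum
  intro j _
  refine le_trans (Polynomial.natDegree_pow_le) ?_
  calc m j * (σp j).natDegree ≤ m j * 1 := Nat.mul_le_mul_left _ (hσ j)
    _ = m j := Nat.mul_one _

lemma eval_aeval_poly (σp : Fin 3 → Polynomial ℝ) (p : MvP) (s : ℝ) :
    Polynomial.eval s (MvPolynomial.aeval σp p)
      = eval (fun j => Polynomial.eval s (σp j)) p := by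
  have hcomp := comp_aeval (R := ℝ) σp (Polynomial.aeval s)
  have h2 := congrArg (fun Φ => Φ p) hcomp
  simp only [AlgHom.comp_apply] at h2
  rw [← Polynomial.coe_aeval_eq_eval, h2, ← maeval_eq]

lemma isHom_quot {g q : MvP} (hg : g.IsHomogeneous 2) (hg0 : g ≠ 0)
    (hgq : (g * q).IsHomogeneous 4) : q.IsHomogeneous 2 := by
  have key : ∀ j, j ≠ 2 → homogeneousComponent j q = 0 := by
    intro j hj
    by_cases hjle : j ≤ q.totalDegree
    · have hq' : g * q = ∑ k ∈ Finset.range (q.totalDegree + 1),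
          g * homogeneousComponent k q := by
        conv_lhs => rw [← sum_homogeneousComponent q]
        rw [Finset.mul_sum]
      have h1 : homogeneousComponent (2 + j) (g * q) = 0 := by
        rw [homogeneousComponent_of_mem ((mem_homogeneousSubmodule _ _).mpr hgq)]
        rw [if_neg (by omega)]
      rw [hq', map_sum] at h1
      have h2 : ∀ k ∈ Finset.range (q.totalDegree + 1),
          homogeneousComponent (2 + j) (g * homogeneousComponent k q)
            = if k = j then g * homogeneousComponent j q else 0 := by
        intro k _
        rw [homogeneousComponent_of_mem ((mem_homogeneousSubmodule _ _).mpr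
          (hg.mul (homogeneousComponent_isHomogeneous k q)))]
        by_cases hkj : k = j
        · subst hkj; rw [if_pos rfl, if_pos rfl]
        · rw [if_neg (by omega), if_neg hkj]
      rw [Finset.sum_congr rfl h2, Finset.sum_ite_eq'] at h1
      rw [if_pos (Finset.mem_range.mpr (by omega))] at h1
      exact (mul_eq_zero.mp h1).resolve_left hg0
    · exact homogeneousComponent_eq_zero j q (by omega)
  by_cases h2le : 2 ≤ q.totalDegree
  · have hq2 : q = homogeneousComponent 2 q := by
      conv_lhs => rw [← sum_homogeneousComponent q]
      rw [Finset.sum_eq_single 2]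
      · intro k _ hk; exact key k hk
      · intro h; exact absurd (Finset.mem_range.mpr (by omega)) h
    rw [hq2]
    exact homogeneousComponent_isHomogeneous 2 q
  · have hq0 : q = 0 := by
      conv_lhs => rw [← sum_homogeneousComponent q]
      apply Finset.sum_eq_zero
      intro k hk
      rw [Finset.mem_range] at hk
      exact key k (by omega)
    rw [hq0]
    exact isHomogeneous_zero _ _ _

set_option maxHeartbeats 1000000 in
theorem stmt_8 (l : MvP) (hl : l.IsHomogeneous 1) (hl0 : l ≠ 0)
    (a b c : Fin 3 → ℝ) (ha : a ≠ 0) (hb : b ≠ 0) (hc : c ≠ 0)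
    (hab : ∀ t : ℝ, a ≠ t • b) (hac : ∀ t : ℝ, a ≠ t • c) (hbc : ∀ t : ℝ, b ≠ t • c)
    (hla : eval a l = 0) (hlb : eval b l = 0) (hlc : eval c l = 0)
    (f : MvP) (hf : f ∈ Pcone)
    (hfa : eval a f = 0) (hfb : eval b f = 0) (hfc : eval c f = 0) :
    ∃ q : MvP, q.IsHomogeneous 2 ∧ (∀ x : Fin 3 → ℝ, 0 ≤ eval x q) ∧ f = l ^ 2 * q := by
  classical
  obtain ⟨hf4, hfnn⟩ := hf
  set co : Fin 3 → ℝ := fun i => coeff (Finsupp.single i 1) l with hco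
  have hlrep : l = lin co := linear_rep hl
  have hevall : ∀ x : Fin 3 → ℝ, eval x l = ∑ i : Fin 3, co i * x i := by
    intro x; rw [hlrep, eval_lin]
  obtain ⟨i0, hi0⟩ : ∃ i, co i ≠ 0 := by
    by_contra h
    push_neg at h
    apply hl0
    rw [hlrep, lin]
    apply Finset.sum_eq_zero
    intro i _
    rw [h i, map_zero, zero_mul]
  have hS : 0 < ∑ i : Fin 3, co i * co i := by
    apply Finset.sum_pos' (fun i _ => mul_self_nonneg _)
    exact ⟨i0, Finset.mem_univ _, mul_self_pos.mpr hi0⟩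
  set L : (Fin 3 → ℝ) →ₗ[ℝ] ℝ :=
    { toFun := fun x => ∑ i : Fin 3, co i * x i
      map_add' := by intro x y; simp [mul_add, Finset.sum_add_distrib]
      map_smul' := by
        intro t x
        simp only [Pi.smul_apply, smul_eq_mul, RingHom.id_apply, Finset.mul_sum]
        apply Finset.sum_congr rfl
        intros; ring } with hL
  have hLdef : ∀ x, L x = eval x l := fun x => (hevall x).symm
  have hLco : 0 < L co := hS
  have haK : L a = 0 := by rw [hLdef]; exact hla
  have hbK : L b = 0 := by rw [hLdef]; exact hlb
  have hcK : L c = 0 := by rw [hLdef]; exact hlc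
  have hli : LinearIndependent ℝ ![a, b] := by
    rw [linearIndependent_fin2]
    constructor
    · simpa using hb
    · intro t ht
      simp only [Matrix.cons_val_one, Matrix.head_cons, Matrix.cons_val_zero] at ht
      exact hab t ht.symm
  have hrange : LinearMap.range L = ⊤ := by
    rw [LinearMap.range_eq_top]
    intro y
    refine ⟨(y / L co) • co, ?_⟩
    rw [map_smul, smul_eq_mul]
    field_simp
  have hkerrank : Module.finrank ℝ (LinearMap.ker L) = 2 := by
    have h3 := LinearMap.finrank_range_add_finrank_ker L
    rw [hrange, finrank_top, Module.finrank_self, Module.finrank_pi] at h3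
    simp only [Fintype.card_fin] at h3
    omega
  have hspan : Submodule.span ℝ {a, b} = LinearMap.ker L := by
    apply Submodule.eq_of_le_of_finrank_le
    · rw [Submodule.span_le]
      intro x hx
      simp only [Set.mem_insert_iff, Set.mem_singleton_iff] at hx
      rcases hx with rfl | rfl
      · exact LinearMap.mem_ker.mpr haK
      · exact LinearMap.mem_ker.mpr hbK
    · rw [hkerrank]
      have hr : Set.range ![a, b] = {a, b} := by
        ext x
        simp only [Set.mem_range, Fin.exists_fin_two, Matrix.cons_val_zero,
          Matrix.cons_val_one, Matrix.head_cons, Set.mem_insert_iff, Set.mem_singleton_iff]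
        tauto
      rw [← hr, finrank_span_eq_card hli]
      simp
  obtain ⟨α, β, hc_comb⟩ := Submodule.mem_span_pair.mp
    (by rw [hspan]; exact LinearMap.mem_ker.mpr hcK : c ∈ Submodule.span ℝ {a, b})
  have hβ : β ≠ 0 := by
    intro h; subst h
    have hc' : α • a = c := by simpa using hc_comb
    have hα0 : α ≠ 0 := by
      rintro rfl; apply hc; rw [← hc']; simp
    exact hac α⁻¹ (by rw [← hc', smul_smul, inv_mul_cancel₀ hα0, one_smul])
  have hα : α ≠ 0 := by
    intro h; subst h
    have hc' : β • b = c := by simpa using hc_comb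
    exact hbc β⁻¹ (by rw [← hc', smul_smul, inv_mul_cancel₀ hβ, one_smul])
  set lam : ℝ := if α + β = 0 then 2 else 1 with hlam
  have hlam0 : lam ≠ 0 := by rw [hlam]; split <;> norm_num
  have hD : α * lam + β ≠ 0 := by
    rw [hlam]; split
    · rename_i h; intro h2; apply hα; linarith
    · rename_i h; intro h2; apply h; linarith
  set u : Fin 3 → ℝ := fun j => a j - lam * b j with hu
  set v : Fin 3 → ℝ := fun j => a j + lam * b j with hv
  set ψ : Polynomial ℝ := MvPolynomial.aeval
    (fun j => Polynomial.C (u j) * Polynomial.X + Polynomial.C (v j)) f with hψ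
  have hψeval : ∀ s : ℝ, ψ.eval s = eval (fun j => s * u j + v j) f := by
    intro s
    rw [hψ, eval_aeval_poly]
    have he : (fun j => Polynomial.eval s
        (Polynomial.C (u j) * Polynomial.X + Polynomial.C (v j)))
        = fun j => s * u j + v j := by
      funext j
      simp only [Polynomial.eval_add, Polynomial.eval_mul, Polynomial.eval_C,
        Polynomial.eval_X]
      ring
    rw [he]
  have hψnn : ∀ s, 0 ≤ ψ.eval s := fun s => by rw [hψeval]; exact hfnn _
  have hψdeg : ψ.natDegree ≤ 4 := by
    refine le_trans (natDegree_aeval_le _ (fun j => Polynomial.natDegree_linear_le) f)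
      hf4.totalDegree_le
  have hroot1 : ψ.eval 1 = 0 := by
    rw [hψeval]
    have he : (fun j => 1 * u j + v j) = (2:ℝ) • a := by
      funext j
      simp only [hu, hv, Pi.smul_apply, smul_eq_mul]
      ring
    rw [he, eval_smul_of_isHom hf4, hfa, mul_zero]
  have hroot2 : ψ.eval (-1) = 0 := by
    rw [hψeval]
    have he : (fun j => (-1:ℝ) * u j + v j) = (2*lam) • b := by
      funext j
      simp only [hu, hv, Pi.smul_apply, smul_eq_mul]
      ring
    rw [he, eval_smul_of_isHom hf4, hfb, mul_zero]
  set sc : ℝ := (α * lam - β) / (α * lam + β) with hsc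
  have hroot3 : ψ.eval sc = 0 := by
    rw [hψeval]
    have he : (fun j => sc * u j + v j) = (2 * lam / (α * lam + β)) • c := by
      funext j
      have hcj : α * a j + β * b j = c j := by
        have h := congrFun hc_comb j
        simpa using h
      simp only [hu, hv, Pi.smul_apply, smul_eq_mul, ← hcj, hsc]
      field_simp
      ring
    rw [he, eval_smul_of_isHom hf4, hfc, mul_zero]
  have hsc1 : sc ≠ 1 := by
    intro h
    rw [hsc, div_eq_one_iff_eq hD] at h
    apply hβ; linarith
  have hsc2 : sc ≠ -1 := by
    intro h
    rw [hsc, div_eq_iff hD] at h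
    have h2 : α * lam = 0 := by linarith
    rcases mul_eq_zero.mp h2 with h3 | h3
    · exact hα h3
    · exact hlam0 h3
  have hψ0 : ψ = 0 := by
    by_contra hne
    have d1 := sq_dvd_of_nonneg_root hψnn hroot1
    have d2 := sq_dvd_of_nonneg_root hψnn hroot2
    have d3 := sq_dvd_of_nonneg_root hψnn hroot3
    have c12 : IsCoprime (Polynomial.X - Polynomial.C (1:ℝ))
        (Polynomial.X - Polynomial.C (-1:ℝ)) :=
      Polynomial.isCoprime_X_sub_C_of_isUnit_sub (isUnit_iff_ne_zero.mpr (by norm_num))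
    have c13 : IsCoprime (Polynomial.X - Polynomial.C (1:ℝ))
        (Polynomial.X - Polynomial.C sc) :=
      Polynomial.isCoprime_X_sub_C_of_isUnit_sub
        (isUnit_iff_ne_zero.mpr (sub_ne_zero.mpr (Ne.symm hsc1)))
    have c23 : IsCoprime (Polynomial.X - Polynomial.C (-1:ℝ))
        (Polynomial.X - Polynomial.C sc) :=
      Polynomial.isCoprime_X_sub_C_of_isUnit_sub
        (isUnit_iff_ne_zero.mpr (sub_ne_zero.mpr (Ne.symm hsc2)))
    have d12 : (Polynomial.X - Polynomial.C (1:ℝ))^2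
        * (Polynomial.X - Polynomial.C (-1:ℝ))^2 ∣ ψ := (c12.pow).mul_dvd d1 d2
    have dall := ((c13.pow).mul_left (c23.pow)).mul_dvd d12 d3
    have hdeg := Polynomial.natDegree_le_of_dvd dall hne
    have h6 : ((Polynomial.X - Polynomial.C (1:ℝ))^2
        * (Polynomial.X - Polynomial.C (-1:ℝ))^2
        * (Polynomial.X - Polynomial.C sc)^2).natDegree = 6 := by
      rw [Polynomial.natDegree_mul
          (mul_ne_zero (pow_ne_zero _ (Polynomial.X_sub_C_ne_zero _))
            (pow_ne_zero _ (Polynomial.X_sub_C_ne_zero _)))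
          (pow_ne_zero _ (Polynomial.X_sub_C_ne_zero _)),
        Polynomial.natDegree_mul (pow_ne_zero _ (Polynomial.X_sub_C_ne_zero _))
          (pow_ne_zero _ (Polynomial.X_sub_C_ne_zero _)),
        Polynomial.natDegree_pow, Polynomial.natDegree_pow, Polynomial.natDegree_pow,
        Polynomial.natDegree_X_sub_C, Polynomial.natDegree_X_sub_C,
        Polynomial.natDegree_X_sub_C]
    rw [h6] at hdeg
    omega
  have hkerf : ∀ x : Fin 3 → ℝ, eval x l = 0 → eval x f = 0 := by
    intro x hx
    obtain ⟨p, qq, hx_comb⟩ := Submodule.mem_span_pair.mp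
      (by rw [hspan]; exact LinearMap.mem_ker.mpr ((hLdef x).trans hx)
        : x ∈ Submodule.span ℝ {a, b})
    set s' : ℝ := p/2 - qq/(2*lam) with hs'
    set t' : ℝ := p/2 + qq/(2*lam) with ht'
    have hxuv : x = fun j => s' * u j + t' * v j := by
      funext j
      have h := congrFun hx_comb j
      simp only [Pi.add_apply, Pi.smul_apply, smul_eq_mul] at h
      rw [← h]
      simp only [hu, hv, hs', ht']
      field_simp
      ring
    have hall : ∀ t : ℝ, eval (fun j => s' * u j + t * v j) f = 0 := by
      have hne : ∀ t : ℝ, t ≠ 0 → eval (fun j => s' * u j + t * v j) f = 0 := by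
        intro t ht
        have he : (fun j => s' * u j + t * v j)
            = t • (fun j => (s'/t) * u j + v j) := by
          funext j
          simp only [Pi.smul_apply, smul_eq_mul]
          field_simp
        rw [he, eval_smul_of_isHom hf4]
        have h2 := hψeval (s'/t)
        rw [hψ0, Polynomial.eval_zero] at h2
        rw [← h2, mul_zero]
      have hcont : Continuous fun t : ℝ => eval (fun j => s' * u j + t * v j) f := by
        apply (MvPolynomial.continuous_eval f).comp
        apply continuous_pi
        intro j
        exact continuous_const.add (continuous_id.mul continuous_const)
      have hext := Continuous.ext_on (dense_compl_singleton (0:ℝ)) hcont continuous_const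
        (fun t ht => hne t ht)
      intro t
      exact congrFun hext t
    rw [hxuv]
    exact hall t'
  have hdvd1 : lin co ∣ f :=
    lin_dvd hi0 f (fun x hx => hkerf x (by rw [hlrep]; exact hx))
  obtain ⟨g, hg⟩ := hdvd1
  have hlshift : ∀ (x : Fin 3 → ℝ) (t : ℝ), eval x l = 0 →
      eval (fun j => x j + t * co j) l = t * ∑ i : Fin 3, co i * co i := by
    intro x t hx
    rw [hevall] at hx ⊢
    calc ∑ i : Fin 3, co i * (x i + t * co i)
        = ∑ i : Fin 3, (co i * x i + t * (co i * co i)) := by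
          apply Finset.sum_congr rfl; intros; ring
      _ = (∑ i : Fin 3, co i * x i) + t * ∑ i : Fin 3, co i * co i := by
          rw [Finset.sum_add_distrib, Finset.mul_sum]
      _ = t * ∑ i : Fin 3, co i * co i := by rw [hx, zero_add]
  have hshiftcont : ∀ (x : Fin 3 → ℝ) (h : MvP),
      Continuous fun t : ℝ => eval (fun j => x j + t * co j) h := by
    intro x h
    apply (MvPolynomial.continuous_eval h).comp
    apply continuous_pi
    intro j
    exact continuous_const.add (continuous_id.mul continuous_const)
  have hval0 : ∀ x : Fin 3 → ℝ, (fun j => x j + (0:ℝ) * co j) = x := by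
    intro x; funext j; simp
  have hkerg : ∀ x : Fin 3 → ℝ, eval x l = 0 → eval x g = 0 := by
    intro x hx
    have hpos : ∀ t > (0:ℝ), 0 ≤ eval (fun j => x j + t * co j) g := by
      intro t ht
      have h0 := hfnn (fun j => x j + t * co j)
      rw [hg, map_mul, ← hlrep, hlshift x t hx] at h0
      exact (mul_nonneg_iff_of_pos_left (mul_pos ht hS)).mp h0
    have hneg : ∀ t < (0:ℝ), eval (fun j => x j + t * co j) g ≤ 0 := by
      intro t ht
      have h0 := hfnn (fun j => x j + t * co j)
      rw [hg, map_mul, ← hlrep, hlshift x t hx] at h0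
      have hneg' : 0 < -(t * ∑ i : Fin 3, co i * co i) := by nlinarith
      have h2 : 0 ≤ -(eval (fun j => x j + t * co j) g) := by
        refine (mul_nonneg_iff_of_pos_left hneg').mp ?_
        rw [neg_mul_neg]
        exact h0
      linarith
    have htt0 : Filter.Tendsto (fun t : ℝ => eval (fun j => x j + t * co j) g)
        (nhds 0) (nhds (eval x g)) := by
      have h := (hshiftcont x g).tendsto 0
      rwa [hval0 x] at h
    have h1 : 0 ≤ eval x g :=
      ge_of_tendsto (htt0.mono_left nhdsWithin_le_nhds)
        (Filter.eventually_of_mem (self_mem_nhdsWithin (s := Set.Ioi (0:ℝ)))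
          (fun t ht => hpos t ht))
    have h2 : eval x g ≤ 0 :=
      le_of_tendsto (htt0.mono_left nhdsWithin_le_nhds)
        (Filter.eventually_of_mem (self_mem_nhdsWithin (s := Set.Iio (0:ℝ)))
          (fun t ht => hneg t ht))
    linarith
  have hdvd2 : lin co ∣ g :=
    lin_dvd hi0 g (fun x hx => hkerg x (by rw [hlrep]; exact hx))
  obtain ⟨q, hq⟩ := hdvd2
  have hfeq : f = l ^ 2 * q := by
    rw [hg, hq, hlrep]; ring
  have hl2 : (l ^ 2).IsHomogeneous 2 := by
    have := hl.pow 2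
    simpa using this
  have hl20 : l ^ 2 ≠ 0 := pow_ne_zero _ hl0
  have hqhom : q.IsHomogeneous 2 := by
    apply isHom_quot hl2 hl20
    rw [← hfeq]
    exact hf4
  have hqnn : ∀ x : Fin 3 → ℝ, 0 ≤ eval x q := by
    intro x
    by_contra hnegq
    push_neg at hnegq
    by_cases hLx : eval x l = 0
    · have hev : ∀ᶠ t : ℝ in nhds 0, eval (fun j => x j + t * co j) q < 0 := by
        have h := (hshiftcont x q).tendsto 0
        rw [hval0 x] at h
        exact h.eventually_lt_const hnegq
      have h2 := hev.filter_mono (nhdsWithin_le_nhds (s := {(0:ℝ)}ᶜ))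
      obtain ⟨t, htneg, ht0⟩ := (h2.and eventually_mem_nhdsWithin).exists
      rw [Set.mem_compl_singleton_iff] at ht0
      have h0 := hfnn (fun j => x j + t * co j)
      rw [hfeq, map_mul, map_pow, hlshift x t hLx] at h0
      have hlv : t * ∑ i : Fin 3, co i * co i ≠ 0 :=
        mul_ne_zero ht0 (ne_of_gt hS)
      have hsqpos : 0 < (t * ∑ i : Fin 3, co i * co i) ^ 2 :=
        lt_of_le_of_ne (sq_nonneg _) (Ne.symm (pow_ne_zero 2 hlv))
      have hq0 : 0 ≤ eval (fun j => x j + t * co j) q :=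
        (mul_nonneg_iff_of_pos_left hsqpos).mp h0
      linarith
    · have h0 := hfnn x
      rw [hfeq, map_mul, map_pow] at h0
      have hp : 0 < (eval x l)^2 :=
        lt_of_le_of_ne (sq_nonneg _) (Ne.symm (pow_ne_zero 2 hLx))
      linarith [(mul_nonneg_iff_of_pos_left hp).mp h0]
  exact ⟨q, hqhom, hqnn, hfeq⟩
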